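/- In a topos E, every saturated class L contains a largest acyclic class A ⊆ L, and a map u belongs to A if and only if every base change of u belongs to L. -/

import Mathlib

/-!
STATEMENT 12: in a topos, every saturated class contains a largest acyclic class, given by the maps all of whose base changes lie in the class.
-/

open CategoryTheory CategoryTheory.Limits

universe w v u

namespace Paper

variable {E : Type u} [Category.{v} E]

/-- `u` is left orthogonal to `f`: every commutative square from `u` to `f` admits a
unique diagonal filler. -/
def Orth {A B X Y : E} (u : A ⟶ B) (f : X ⟶ Y) : Prop :=
  ∀ (x : A ⟶ X) (y : B ⟶ Y), x ≫ f = u ≫ y → ∃! d : B ⟶ X, u ≫ d = x ∧ d ≫ f = y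

/-- A factorization system `(L, R)`: two replete classes of maps with `L` orthogonal to
`R`, such that every map factors as a map in `L` followed by a map in `R`. -/
structure FactorizationSystem (E : Type u) [Category.{v} E] where
  /-- the left class -/
  L : MorphismProperty E
  /-- the right class -/
  R : MorphismProperty E
  replete_L : ∀ ⦃X Y X' Y' : E⦄ (f : X ⟶ Y) (f' : X' ⟶ Y'),
    (Arrow.mk f ≅ Arrow.mk f') → L f → L f'
  replete_R : ∀ ⦃X Y X' Y' : E⦄ (f : X ⟶ Y) (f' : X' ⟶ Y'),
    (Arrow.mk f ≅ Arrow.mk f') → R f → R f'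
  orth : ∀ ⦃A B X Y : E⦄ (u : A ⟶ B) (f : X ⟶ Y), L u → R f → Orth u f
  fac : ∀ ⦃X Y : E⦄ (f : X ⟶ Y), ∃ (Z : E) (l : X ⟶ Z) (r : Z ⟶ Y),
    L l ∧ R r ∧ l ≫ r = f

/-- `P` is stable under base change: any pullback of a map in `P` is in `P`. -/
def StableUnderBaseChange' (P : MorphismProperty E) : Prop :=
  ∀ ⦃W X Y Z : E⦄ (fst : W ⟶ X) (snd : W ⟶ Y) (f : X ⟶ Z) (g : Y ⟶ Z),
    IsPullback fst snd f g → P f → P snd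

end Paper

namespace Paper

universe v₂ u₂
variable {E : Type u} [Category.{v} E]

/-- The full subcategory of the arrow category spanned by `P` is closed under (small)
colimits. -/
def ClosedUnderColimitsArrow (P : MorphismProperty E) : Prop :=
  ∀ (J : Type v) [SmallCategory J] (D : J ⥤ Arrow E) (c : Cocone D),
    IsColimit c → (∀ j, P (D.obj j).hom) → P c.pt.hom

/-- `P` is saturated: it contains the isomorphisms, is closed under composition, and is
closed under colimits in the arrow category. -/
def IsSaturated (P : MorphismProperty E) : Prop :=
  (∀ ⦃X Y : E⦄ (f : X ⟶ Y), IsIso f → P f) ∧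
  (∀ ⦃X Y Z : E⦄ (f : X ⟶ Y) (g : Y ⟶ Z), P f → P g → P (f ≫ g)) ∧
  ClosedUnderColimitsArrow P

/-- `P` is acyclic: saturated and closed under base change. -/
def IsAcyclic (P : MorphismProperty E) : Prop :=
  IsSaturated P ∧ StableUnderBaseChange' P


section Auxiliary

/-- Saturated classes are replete: closed under isomorphism in the arrow category.
This follows from closure under colimits, using a one-point diagram. -/
theorem IsSaturated.replete {L : MorphismProperty E} (hL : IsSaturated L)
    {X Y X' Y' : E} {f : X ⟶ Y} {f' : X' ⟶ Y'} (e : Arrow.mk f ≅ Arrow.mk f')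
    (hf : L f) : L f' := by
  let D : Discrete PUnit.{v+1} ⥤ Arrow E := (Functor.const _).obj (Arrow.mk f)
  let c : Cocone D :=
    { pt := Arrow.mk f'
      ι := { app := fun _ => e.hom, naturality := by intros; simp [D] } }
  have hc : IsColimit c :=
    { desc := fun s => e.inv ≫ s.ι.app ⟨PUnit.unit⟩
      fac := fun s j => by
        obtain ⟨⟨⟩⟩ := j
        simp [c]
      uniq := fun s m w => by
        have h := w ⟨PUnit.unit⟩
        simp [c] at h
        rw [← h, ← Category.assoc]; simp }
  exact hL.2.2 _ D c hc (fun j => hf)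

variable {J : Type w} [SmallCategory J]

/-- The cocone of source components of a colimit cocone in the arrow category is a colimit. -/
noncomputable def arrowLeftIsColimit [HasColimitsOfShape J E] {D : J ⥤ Arrow E} {c : Cocone D}
    (t : IsColimit c) : IsColimit (Arrow.leftFunc.mapCocone c) := by
  let t₀ := Comma.coconeOfPreservesIsColimit D (colimit.isColimit (D ⋙ Arrow.leftFunc))
    (colimit.isColimit (D ⋙ Arrow.rightFunc))
  have h₀ : IsColimit (Arrow.leftFunc.mapCocone (Comma.coconeOfPreserves D
      (colimit.isColimit (D ⋙ Arrow.leftFunc)) (colimit.cocone (D ⋙ Arrow.rightFunc)))) :=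
    IsColimit.ofIsoColimit (colimit.isColimit (D ⋙ Arrow.leftFunc))
      (Cocones.ext (Iso.refl _) (by intro j; exact Category.comp_id _))
  exact IsColimit.ofIsoColimit h₀
    ((Cocones.functoriality D Arrow.leftFunc).mapIso (IsColimit.uniqueUpToIso t₀ t))

/-- The cocone of target components of a colimit cocone in the arrow category is a colimit. -/
noncomputable def arrowRightIsColimit [HasColimitsOfShape J E] {D : J ⥤ Arrow E} {c : Cocone D}
    (t : IsColimit c) : IsColimit (Arrow.rightFunc.mapCocone c) := by
  let t₀ := Comma.coconeOfPreservesIsColimit D (colimit.isColimit (D ⋙ Arrow.leftFunc))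
    (colimit.isColimit (D ⋙ Arrow.rightFunc))
  have h₀ : IsColimit (Arrow.rightFunc.mapCocone (Comma.coconeOfPreserves D
      (colimit.isColimit (D ⋙ Arrow.leftFunc)) (colimit.cocone (D ⋙ Arrow.rightFunc)))) :=
    IsColimit.ofIsoColimit (colimit.isColimit (D ⋙ Arrow.rightFunc))
      (Cocones.ext (Iso.refl _) (by intro j; exact Category.comp_id _))
  exact IsColimit.ofIsoColimit h₀
    ((Cocones.functoriality D Arrow.rightFunc).mapIso (IsColimit.uniqueUpToIso t₀ t))

/-- Transport an `IsColimit` along a componentwise identification of diagrams and cocones. -/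
noncomputable def transportIsColimit {C : Type u₂} [Category.{v₂} C]
    {F G : J ⥤ C} (α : F ≅ G) {c : Cocone F} (t : IsColimit c)
    (d : Cocone G) (hpt : c.pt ≅ d.pt)
    (w : ∀ j, (α.inv.app j ≫ c.ι.app j) ≫ hpt.hom = d.ι.app j) : IsColimit d :=
  IsColimit.equivOfNatIsoOfIso α c d (Cocones.ext hpt w) t

variable (D : J ⥤ Arrow E) (c : Cocone D)

/-- The diagram of sources of `D`, viewed over `c.pt.right`. -/
@[simps] def overLeft : J ⥤ Over c.pt.right where
  obj j := Over.mk ((c.ι.app j).left ≫ c.pt.hom)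
  map {j k} φ := Over.homMk (D.map φ).left (by
    dsimp
    rw [← Category.assoc, ← Arrow.comp_left, c.w φ])

/-- The diagram of targets of `D`, viewed over `c.pt.right`. -/
@[simps] def overRight : J ⥤ Over c.pt.right where
  obj j := Over.mk (c.ι.app j).right
  map {j k} φ := Over.homMk (D.map φ).right (by
    dsimp
    rw [← Arrow.comp_right, c.w φ])

/-- The natural transformation from sources to targets over `c.pt.right`. -/
@[simps] def overNat : overLeft D c ⟶ overRight D c where
  app j := Over.homMk (D.obj j).hom (by
    show (D.obj j).hom ≫ (c.ι.app j).right = (c.ι.app j).left ≫ c.pt.hom; exact (Arrow.w (c.ι.app j)).symm)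
  naturality j k φ := by
    ext
    exact Arrow.w (D.map φ)

@[simps] def coconeOverLeft : Cocone (overLeft D c) where
  pt := Over.mk c.pt.hom
  ι :=
    { app := fun j => Over.homMk (c.ι.app j).left rfl
      naturality := fun j k φ => by
        ext
        dsimp
        exact (congrArg Arrow.Hom.left (c.w φ)).trans (Category.comp_id _).symm }

@[simps] def coconeOverRight : Cocone (overRight D c) where
  pt := Over.mk (𝟙 c.pt.right)
  ι :=
    { app := fun j => Over.homMk (c.ι.app j).right (by exact Category.comp_id _)
      naturality := fun j k φ => by
        ext
        dsimp
        exact (congrArg Arrow.Hom.right (c.w φ)).trans (Category.comp_id _).symm }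

variable {D c} (t : IsColimit c)

noncomputable def coconeOverLeftIsColimit [HasColimitsOfShape J E] :
    IsColimit (coconeOverLeft D c) := by
  apply isColimitOfReflects (Over.forget c.pt.right)
  refine transportIsColimit (NatIso.ofComponents (fun j => Iso.refl _) ?_)
    (arrowLeftIsColimit t) _ (Iso.refl _) ?_
  · intro j k φ; dsimp; simp
  · intro j; dsimp; simp; exact Category.comp_id (Arrow.Hom.left (c.ι.app j))

noncomputable def coconeOverRightIsColimit [HasColimitsOfShape J E] :
    IsColimit (coconeOverRight D c) := by
  apply isColimitOfReflects (Over.forget c.pt.right)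
  refine transportIsColimit (NatIso.ofComponents (fun j => Iso.refl _) ?_)
    (arrowRightIsColimit t) _ (Iso.refl _) ?_
  · intro j k φ; dsimp; simp
  · intro j; dsimp; simp; exact Category.comp_id (Arrow.Hom.right (c.ι.app j))

variable (D c) {Y' : E} (q : Y' ⟶ c.pt.right) [HasPullbacks E]

/-- The diagram obtained by pulling back the arrow diagram `D` along `q`. -/
@[simps] noncomputable def pulledDiagram : J ⥤ Arrow E where
  obj j := Arrow.mk (((Over.pullback q).map ((overNat D c).app j)).left)
  map {j k} φ :=
    { left := ((Over.pullback q).map ((overLeft D c).map φ)).left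
      right := ((Over.pullback q).map ((overRight D c).map φ)).left
      w := by
        simp only [Functor.id_map, Arrow.mk_hom, ← Over.comp_left, ← Functor.map_comp,
          NatTrans.naturality] }
  map_id j := by
    ext
    · exact (congrArg (fun f => ((Over.pullback q).map f).left) ((overLeft D c).map_id j)).trans
        (congrArg Over.Hom.left ((Over.pullback q).map_id _))
    · exact (congrArg (fun f => ((Over.pullback q).map f).left) ((overRight D c).map_id j)).trans
        (congrArg Over.Hom.left ((Over.pullback q).map_id _))
  map_comp φ ψ := by
    ext
    · exact (congrArg (fun f => ((Over.pullback q).map f).left) ((overLeft D c).map_comp φ ψ)).trans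
        (congrArg Over.Hom.left ((Over.pullback q).map_comp _ _))
    · exact (congrArg (fun f => ((Over.pullback q).map f).left) ((overRight D c).map_comp φ ψ)).trans
        (congrArg Over.Hom.left ((Over.pullback q).map_comp _ _))

/-- The cocone on the pulled-back diagram induced by `c`. -/
@[simps] noncomputable def pulledCocone : Cocone (pulledDiagram D c q) where
  pt := Arrow.mk (((Over.pullback q).map
    (Over.homMk c.pt.hom : Over.mk c.pt.hom ⟶ Over.mk (𝟙 c.pt.right))).left)
  ι :=
    { app := fun j =>
        { left := ((Over.pullback q).map ((coconeOverLeft D c).ι.app j)).left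
          right := ((Over.pullback q).map ((coconeOverRight D c).ι.app j)).left
          w := by
            have hsq : (coconeOverLeft D c).ι.app j ≫
                (Over.homMk c.pt.hom : Over.mk c.pt.hom ⟶ Over.mk (𝟙 c.pt.right)) =
                (overNat D c).app j ≫ (coconeOverRight D c).ι.app j := by
              ext
              exact Arrow.w (c.ι.app j)
            exact (congrArg Over.Hom.left ((Over.pullback q).map_comp _ _)).symm.trans
              ((congrArg (fun f => ((Over.pullback q).map f).left) hsq).trans
                (congrArg Over.Hom.left ((Over.pullback q).map_comp _ _))) }
      naturality := fun j k φ => by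
        ext
        · have := congrArg (fun f => ((Over.pullback q).map f).left) ((coconeOverLeft D c).w φ)
          simp only [Functor.map_comp, Over.comp_left] at this
          exact this.trans (Category.comp_id _).symm
        · have := congrArg (fun f => ((Over.pullback q).map f).left) ((coconeOverRight D c).w φ)
          simp only [Functor.map_comp, Over.comp_left] at this
          exact this.trans (Category.comp_id _).symm }

end Auxiliary

/-- in a topos (here: a finitely complete cocomplete category with
universal colimits), every saturated class `L` contains a largest acyclic class `A`,
consisting exactly of the maps all of whose base changes belong to `L`. -/
theorem largest_acyclic_class [HasFiniteLimits E] [HasColimits E]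
    (univ : ∀ {A B : E} (f : A ⟶ B), PreservesColimitsOfSize.{v, v} (Over.pullback f))
    (L : MorphismProperty E) (hL : IsSaturated L) :
    ∃ A : MorphismProperty E, IsAcyclic A ∧
      (∀ ⦃X Y : E⦄ (f : X ⟶ Y), A f → L f) ∧
      (∀ A' : MorphismProperty E, IsAcyclic A' →
        (∀ ⦃X Y : E⦄ (f : X ⟶ Y), A' f → L f) →
        ∀ ⦃X Y : E⦄ (f : X ⟶ Y), A' f → A f) ∧
      (∀ ⦃X Y : E⦄ (u : X ⟶ Y), A u ↔
        ∀ ⦃X' Y' : E⦄ (p : X' ⟶ X) (u' : X' ⟶ Y') (q : Y' ⟶ Y),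
          IsPullback p u' u q → L u') := by
  classical
  refine ⟨fun {X Y} u => ∀ ⦃X' Y' : E⦄ (p : X' ⟶ X) (u' : X' ⟶ Y') (q : Y' ⟶ Y),
      IsPullback p u' u q → L u', ⟨⟨?_, ?_, ?_⟩, ?_⟩, ?_, ?_, fun {X Y} u => Iff.rfl⟩
  · -- isomorphisms
    intro X Y f hf X' Y'' p u' q h
    refine hL.1 u' ?_
    refine ⟨⟨h.lift (q ≫ CategoryTheory.inv f) (𝟙 _) (by simp), ?_, h.lift_snd _ _ _⟩⟩
    apply h.hom_ext
    · simp only [Category.assoc, h.lift_fst, Category.id_comp]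
      rw [← Category.assoc, ← h.w, Category.assoc, IsIso.hom_inv_id, Category.comp_id]
    · simp [h.lift_snd]
  · -- composition
    intro X Y Z f g hf hg X' Y'' p w q h
    have hw : (p ≫ f) ≫ g = w ≫ q := by rw [Category.assoc]; exact h.w
    have htop : IsPullback p (pullback.lift (p ≫ f) w hw) f (pullback.fst g q) := by
      apply IsPullback.of_bot _ (pullback.lift_fst _ _ _).symm (IsPullback.of_hasPullback g q)
      rw [pullback.lift_snd]
      exact h
    have := hL.2.1 _ _ (hf p _ (pullback.fst g q) htop)
      (hg (pullback.fst g q) (pullback.snd g q) q (IsPullback.of_hasPullback g q))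
    rwa [pullback.lift_snd] at this
  · -- closure under colimits
    intro J _ D c t hj X' Y'' p u' q h
    haveI : PreservesColimitsOfSize.{v, v} (Over.pullback q) := univ q
    have tG : IsColimit ((Over.pullback q).mapCocone (coconeOverLeft D c)) :=
      isColimitOfPreserves _ (coconeOverLeftIsColimit t)
    have tH : IsColimit ((Over.pullback q).mapCocone (coconeOverRight D c)) :=
      isColimitOfPreserves _ (coconeOverRightIsColimit t)
    have tGf := isColimitOfPreserves (Over.forget _) tG
    have tHf := isColimitOfPreserves (Over.forget _) tH
    have tL : IsColimit (Arrow.leftFunc.mapCocone (pulledCocone D c q)) :=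
      transportIsColimit (NatIso.ofComponents (fun j => Iso.refl _) (by intros; dsimp; simp))
        tGf _ (Iso.refl _) (by intro j; exact (Category.comp_id _).trans (Category.id_comp _))
    have tR : IsColimit (Arrow.rightFunc.mapCocone (pulledCocone D c q)) :=
      transportIsColimit (NatIso.ofComponents (fun j => Iso.refl _) (by intros; dsimp; simp))
        tHf _ (Iso.refl _) (by intro j; exact (Category.comp_id _).trans (Category.id_comp _))
    set DP := pulledDiagram D c q with hDPdef
    let c₀ : Cocone DP := Comma.coconeOfPreserves DP (colimit.isColimit (DP ⋙ Arrow.leftFunc))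
      (colimit.cocone (DP ⋙ Arrow.rightFunc))
    have t₀ : IsColimit c₀ := Comma.coconeOfPreservesIsColimit DP (colimit.isColimit _)
      (colimit.isColimit _)
    have hobj : ∀ j, L (DP.obj j).hom := by
      intro j
      have eqfst : ((Over.pullback q).map ((overNat D c).app j)).left ≫
          pullback.fst (c.ι.app j).right q =
          pullback.fst ((c.ι.app j).left ≫ c.pt.hom) q ≫ (D.obj j).hom := by
        exact pullback.lift_fst _ _ _
      have eqsnd : ((Over.pullback q).map ((overNat D c).app j)).left ≫
          pullback.snd (c.ι.app j).right q =
          pullback.snd ((c.ι.app j).left ≫ c.pt.hom) q := by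
        exact pullback.lift_snd _ _ _
      have key : IsPullback (pullback.fst ((c.ι.app j).left ≫ c.pt.hom) q)
          (((Over.pullback q).map ((overNat D c).app j)).left) (D.obj j).hom
          (pullback.fst (c.ι.app j).right q) := by
        apply IsPullback.of_bot _ eqfst.symm (IsPullback.of_hasPullback (c.ι.app j).right q)
        exact (congrArg₂ (fun (a : pullback ((c.ι.app j).left ≫ c.pt.hom) q ⟶ Y'')
            (b : (D.obj j).left ⟶ c.pt.right) =>
            IsPullback (pullback.fst ((c.ι.app j).left ≫ c.pt.hom) q) a b q)
          eqsnd (Arrow.w (c.ι.app j)).symm).mpr (IsPullback.of_hasPullback _ q)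
      exact hj j _ _ _ key
    have h₀ : L c₀.pt.hom := hL.2.2 J DP c₀ t₀ hobj
    let eL := IsColimit.coconePointUniqueUpToIso (colimit.isColimit (DP ⋙ Arrow.leftFunc)) tL
    let eR := IsColimit.coconePointUniqueUpToIso (colimit.isColimit (DP ⋙ Arrow.rightFunc)) tR
    have hcomm : eL.hom ≫ (pulledCocone D c q).pt.hom = c₀.pt.hom ≫ eR.hom := by
      apply colimit.hom_ext
      intro j
      have hL1 : colimit.ι (DP ⋙ Arrow.leftFunc) j ≫ eL.hom =
          ((pulledCocone D c q).ι.app j).left :=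
        IsColimit.comp_coconePointUniqueUpToIso_hom (colimit.isColimit _) tL j
      have hR1 : colimit.ι (DP ⋙ Arrow.rightFunc) j ≫ eR.hom =
          ((pulledCocone D c q).ι.app j).right :=
        IsColimit.comp_coconePointUniqueUpToIso_hom (colimit.isColimit _) tR j
      have h2 : colimit.ι (DP ⋙ Arrow.leftFunc) j ≫ c₀.pt.hom =
          (DP.obj j).hom ≫ colimit.ι (DP ⋙ Arrow.rightFunc) j :=
        Arrow.w (c₀.ι.app j)
      have h3 : ((pulledCocone D c q).ι.app j).left ≫ (pulledCocone D c q).pt.hom =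
          (DP.obj j).hom ≫ ((pulledCocone D c q).ι.app j).right :=
        Arrow.w ((pulledCocone D c q).ι.app j)
      have e1 : (colimit.ι (DP ⋙ Arrow.leftFunc) j ≫ eL.hom) ≫ (pulledCocone D c q).pt.hom =
          (DP.obj j).hom ≫ ((pulledCocone D c q).ι.app j).right :=
        (congrArg (· ≫ (pulledCocone D c q).pt.hom) hL1).trans h3
      have e2 : (colimit.ι (DP ⋙ Arrow.leftFunc) j ≫ c₀.pt.hom) ≫ eR.hom =
          (DP.obj j).hom ≫ ((pulledCocone D c q).ι.app j).right :=
        (congrArg (· ≫ eR.hom) h2).trans ((Category.assoc _ _ _).trans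
          (congrArg ((DP.obj j).hom ≫ ·) hR1))
      exact (Category.assoc _ _ _).symm.trans (e1.trans (e2.symm.trans (Category.assoc _ _ _)))
    have hm : L (pulledCocone D c q).pt.hom :=
      hL.replete (f := c₀.pt.hom) (Arrow.isoMk eL eR hcomm) h₀
    have iso1 : Arrow.mk ((pulledCocone D c q).pt.hom) ≅ Arrow.mk (pullback.snd c.pt.hom q) := by
      refine Arrow.isoMk (Iso.refl _) (@asIso _ _ _ _ (pullback.snd (𝟙 c.pt.right) q) (pullback_snd_iso_of_left_iso _ _)) ?_
      exact (Category.id_comp _).trans (Over.w ((Over.pullback q).map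
        (Over.homMk c.pt.hom : Over.mk c.pt.hom ⟶ Over.mk (𝟙 c.pt.right)))).symm
    have iso2 : Arrow.mk (pullback.snd c.pt.hom q) ≅ Arrow.mk u' := by
      refine Arrow.isoMk h.isoPullback.symm (Iso.refl _) ?_
      dsimp
      rw [Category.comp_id, Iso.inv_comp_eq, h.isoPullback_hom_snd]
    exact hL.replete (iso1 ≪≫ iso2) hm
  · -- stability under base change
    intro W X Y Z fst snd f g hpb hf X' Y'' p u' q hsq
    exact hf (p ≫ fst) u' (q ≫ g) (hsq.paste_horiz hpb)
  · -- contained in L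
    intro X Y f hf
    exact hf (𝟙 X) f (𝟙 Y) IsPullback.of_id_fst
  · -- largest
    intro A' hA' hsub X Y f hf X' Y'' p u' q h
    exact hsub _ (hA'.2 p u' f q h hf)


end Paper
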